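/- (Alternance theorem) Let φ₁,…,φₙ be linearly independent continuous real-valued functions on a compact metric space Q, 𝒫 = span{φ₁,…,φₙ}, ℓ a nonzero linear functional on 𝒫, and let u(t) = (φ₁(t),…,φₙ(t)) ∈ ℝⁿ. A polynomial p ∈ 𝒫 with ℓ(p) = 1 satisfies ‖p‖_{C(Q)} = min{‖q‖_{C(Q)} : q ∈ 𝒫, ℓ(q) = 1} if and only if p possesses an alternance of at most n points, i.e., there exist N ≤ n points t₁,…,t_N ∈ Q with |p(tᵢ)| = ‖p‖_{C(Q)} for all i such that the conic hull of the vectors a(tᵢ) = sign(p(tᵢ))·u(tᵢ), i = 1,…,N, contains the co-vector of ℓ or its negative. -/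

import Mathlib

open Set Matrix

noncomputable section

/-- The uniform norm `‖p‖_{C(Q)} = sup_{t ∈ Q} |p t|` of a function on `Q`. -/
def supNorm {Q : Type*} (p : Q → ℝ) : ℝ :=
  sSup (Set.range fun t => |p t|)

/-- The moment vector-function `u(t) = (φ₁(t),…,φₙ(t)) ∈ ℝⁿ`. -/
def momentVec {Q : Type*} {n : ℕ} (φ : Fin n → Q → ℝ) (t : Q) : Fin n → ℝ :=
  fun i => φ i t

/-- Evaluation of the polynomial with coefficient vector `p`: `p(t) = ⟨p, u(t)⟩`. -/
def polyEval {Q : Type*} {n : ℕ} (φ : Fin n → Q → ℝ) (p : Fin n → ℝ) (t : Q) : ℝ :=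
  p ⬝ᵥ momentVec φ t

set_option maxHeartbeats 1000000

section helpers

variable {Q : Type*} [MetricSpace Q] [CompactSpace Q] {n : ℕ}

lemma momentVec_continuous (φ : Fin n → Q → ℝ) (hcont : ∀ i, Continuous (φ i)) :
    Continuous (momentVec φ) :=
  continuous_pi fun i => hcont i

lemma polyEval_continuous (φ : Fin n → Q → ℝ) (hcont : ∀ i, Continuous (φ i))
    (v : Fin n → ℝ) : Continuous (polyEval φ v) := by
  unfold polyEval dotProduct momentVec
  exact continuous_finset_sum _ fun i _ => continuous_const.mul (hcont i)

lemma supNorm_le {f : Q → ℝ} {a : ℝ} (ha : 0 ≤ a) (h : ∀ t, |f t| ≤ a) :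
    supNorm f ≤ a :=
  Real.sSup_le (by rintro y ⟨t, rfl⟩; exact h t) ha

lemma abs_le_supNorm [Nonempty Q] {f : Q → ℝ} (hf : Continuous f) (t : Q) :
    |f t| ≤ supNorm f := by
  obtain ⟨t0, -, h⟩ := isCompact_univ.exists_isMaxOn univ_nonempty hf.abs.continuousOn
  exact le_csSup ⟨|f t0|, by rintro y ⟨s, rfl⟩; exact h (mem_univ s)⟩ (mem_range_self t)

lemma exists_abs_eq_supNorm [Nonempty Q] {f : Q → ℝ} (hf : Continuous f) :
    ∃ t, |f t| = supNorm f := by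
  obtain ⟨t0, -, h⟩ := isCompact_univ.exists_isMaxOn univ_nonempty hf.abs.continuousOn
  exact ⟨t0, le_antisymm (abs_le_supNorm hf t0)
    (Real.sSup_le (by rintro y ⟨s, rfl⟩; exact h (mem_univ s)) (abs_nonneg _))⟩

lemma real_sign_mul_self (x : ℝ) : Real.sign x * x = |x| := by
  rcases lt_trichotomy x 0 with h | h | h
  · rw [Real.sign_of_neg h, abs_of_neg h]; ring
  · simp [h]
  · rw [Real.sign_of_pos h, abs_of_pos h]; ring

lemma real_sign_mul_le_abs (y x : ℝ) : Real.sign y * x ≤ |x| := by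
  rcases lt_trichotomy y 0 with h | h | h
  · rw [Real.sign_of_neg h]; simpa using neg_le_abs x
  · simp [h, abs_nonneg]
  · rw [Real.sign_of_pos h]; simpa using le_abs_self x

lemma sum_dite_lt {β : Type*} [AddCommMonoid β] {n N : ℕ} (hN : N ≤ n) (f : Fin N → β) :
    ∑ i : Fin n, (if h : (i : ℕ) < N then f ⟨i, h⟩ else 0) = ∑ j : Fin N, f j := by
  rw [Fin.sum_univ_eq_sum_range (fun i => if h : i < N then f ⟨i, h⟩ else 0) n]
  rw [← Finset.sum_subset (Finset.range_subset_range.mpr hN)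
    (fun i _ hiN => dif_neg (by simpa using hiN))]
  rw [← Fin.sum_univ_eq_sum_range (fun i => if h : i < N then f ⟨i, h⟩ else 0) N]
  exact Finset.sum_congr rfl fun i _ => by rw [dif_pos i.isLt]

lemma conic_caratheodory {n : ℕ} (A : Set (Fin n → ℝ)) :
    ∀ (N : ℕ) (v : Fin N → (Fin n → ℝ)) (c : Fin N → ℝ), (∀ i, v i ∈ A) → (∀ i, 0 ≤ c i) →
    ∃ (N' : ℕ), N' ≤ n ∧ ∃ (v' : Fin N' → (Fin n → ℝ)) (c' : Fin N' → ℝ),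
      (∀ i, v' i ∈ A) ∧ (∀ i, 0 ≤ c' i) ∧ ∑ i, c' i • v' i = ∑ i, c i • v i := by
  intro N
  induction N with
  | zero =>
      intro v c _ _
      exact ⟨0, Nat.zero_le n, v, c, fun i => i.elim0, fun i => i.elim0, rfl⟩
  | succ m ih =>
      intro v c hv hc
      by_cases hmn : m + 1 ≤ n
      · exact ⟨m + 1, hmn, v, c, hv, hc, rfl⟩
      · have hcard : ¬ LinearIndependent ℝ v := by
          intro hind
          have h1 := hind.fintype_card_le_finrank
          rw [Module.finrank_fin_fun] at h1
          simp only [Fintype.card_fin] at h1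
          omega
        obtain ⟨g, hg0, j, hgj⟩ := Fintype.not_linearIndependent_iff.mp hcard
        obtain ⟨d, hd0, j0, hdj0⟩ : ∃ d : Fin (m + 1) → ℝ,
            ∑ i, d i • v i = 0 ∧ ∃ j, 0 < d j := by
          rcases hgj.lt_or_gt with h | h
          · exact ⟨-g, by simpa using hg0, j, by simpa using h⟩
          · exact ⟨g, hg0, j, h⟩
        classical
        set s : Finset (Fin (m + 1)) := Finset.univ.filter (fun i => 0 < d i) with hs
        obtain ⟨i0, hi0s, hi0min⟩ := s.exists_min_image (fun i => c i / d i)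
          ⟨j0, by simp [hs, hdj0]⟩
        have hdi0 : 0 < d i0 := by simpa [hs] using hi0s
        set lam := c i0 / d i0 with hlamdef
        have hlam : 0 ≤ lam := div_nonneg (hc i0) hdi0.le
        set c' : Fin (m + 1) → ℝ := fun i => c i - lam * d i with hc'def
        have hc' : ∀ i, 0 ≤ c' i := by
          intro i
          by_cases hdi : 0 < d i
          · have h2 : lam * d i ≤ c i := by
              have h3 := mul_le_mul_of_nonneg_right (hi0min i (by simp [hs, hdi])) hdi.le
              rwa [div_mul_cancel₀ _ hdi.ne'] at h3
            simp only [hc'def]; linarith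
          · push_neg at hdi
            have h2 : lam * d i ≤ 0 := mul_nonpos_of_nonneg_of_nonpos hlam hdi
            simp only [hc'def]; linarith [hc i]
        have hc'i0 : c' i0 = 0 := by
          simp only [hc'def, hlamdef]
          field_simp
          ring
        have hsum : ∑ i, c' i • v i = ∑ i, c i • v i := by
          simp only [hc'def, sub_smul, mul_smul]
          rw [Finset.sum_sub_distrib, ← Finset.smul_sum, hd0, smul_zero, sub_zero]
        have hdrop : ∑ i : Fin m, (c' (i0.succAbove i)) • v (i0.succAbove i)
            = ∑ i, c' i • v i := by
          rw [Fin.sum_univ_succAbove (fun i => c' i • v i) i0, hc'i0, zero_smul, zero_add]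
        obtain ⟨N', hN', v', c'', h1, h2, h3⟩ := ih (fun i => v (i0.succAbove i))
          (fun i => c' (i0.succAbove i)) (fun i => hv _) (fun i => hc' _)
        exact ⟨N', hN', v', c'', h1, h2, by rw [h3, hdrop, hsum]⟩

end helpers

lemma finsum_dotProduct {m ι : Type*} [Fintype m] (s : Finset ι) (f : ι → m → ℝ)
    (v : m → ℝ) : (∑ i ∈ s, f i) ⬝ᵥ v = ∑ i ∈ s, f i ⬝ᵥ v := by
  simp only [dotProduct, Finset.sum_apply, Finset.sum_mul]
  rw [Finset.sum_comm]

lemma dotProduct_finsum {m ι : Type*} [Fintype m] (s : Finset ι) (v : m → ℝ)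
    (f : ι → m → ℝ) : v ⬝ᵥ (∑ i ∈ s, f i) = ∑ i ∈ s, v ⬝ᵥ f i := by
  simp only [dotProduct, Finset.sum_apply, Finset.mul_sum]
  rw [Finset.sum_comm]

/-- (Alternance theorem) A polynomial `p ∈ 𝒫` with `ℓ(p) = 1` has least deviation from zero
iff it possesses an alternance of at most `n` points: points `t₁,…,t_N ∈ Q`, `N ≤ n`, with
`|p(tᵢ)| = ‖p‖_{C(Q)}`, such that the conic hull of the vectors `a(tᵢ) = sign(p(tᵢ))·u(tᵢ)`
(the set of their nonnegative linear combinations) contains `ℓ` or `−ℓ`. -/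
theorem least_deviation_iff_alternance {Q : Type*} [MetricSpace Q] [CompactSpace Q]
    {n : ℕ} (φ : Fin n → Q → ℝ) (hcont : ∀ i, Continuous (φ i))
    (hli : LinearIndependent ℝ φ)
    (ℓ : Fin n → ℝ) (hℓ : ℓ ≠ 0)
    (p : Fin n → ℝ) (hp : ℓ ⬝ᵥ p = 1) :
    (∀ q : Fin n → ℝ, ℓ ⬝ᵥ q = 1 → supNorm (polyEval φ p) ≤ supNorm (polyEval φ q)) ↔
      ∃ (N : ℕ), N ≤ n ∧ ∃ ts : Fin N → Q,
        (∀ i, |polyEval φ p (ts i)| = supNorm (polyEval φ p)) ∧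
        ∃ c : Fin N → ℝ, (∀ i, 0 ≤ c i) ∧
          (ℓ = ∑ i, c i • Real.sign (polyEval φ p (ts i)) • momentVec φ (ts i) ∨
           -ℓ = ∑ i, c i • Real.sign (polyEval φ p (ts i)) • momentVec φ (ts i)) := by
  classical
  have hn : 0 < n := by
    rcases Nat.eq_zero_or_pos n with h | h
    · exact absurd (by subst h; ext i; exact i.elim0) hℓ
    · exact h
  have hQ : Nonempty Q := by
    by_contra h
    exact hli.ne_zero ⟨0, hn⟩ (funext fun t => ((not_nonempty_iff.mp h).false t).elim)
  set P : Q → ℝ := polyEval φ p with hPdef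
  have hPc : Continuous P := polyEval_continuous φ hcont p
  set M : ℝ := supNorm P with hMdef
  have hle : ∀ t, |P t| ≤ M := fun t => abs_le_supNorm hPc t
  obtain ⟨tmax, htmax⟩ := exists_abs_eq_supNorm hPc
  have hM0 : 0 < M := by
    rcases ((abs_nonneg (P tmax)).trans_eq htmax).lt_or_eq with h | h
    · exact h
    · exfalso
      have hPz : ∀ t, P t = 0 := fun t =>
        abs_eq_zero.mp (le_antisymm (h ▸ hle t) (abs_nonneg _))
      have hp0 : ∀ i, p i = 0 := by
        refine Fintype.linearIndependent_iff.mp hli p ?_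
        funext t
        have h2 := hPz t
        simp only [hPdef, polyEval, dotProduct, momentVec] at h2
        simpa [Finset.sum_apply] using h2
      have h3 : ℓ ⬝ᵥ p = 0 := by
        rw [show p = 0 from funext hp0, dotProduct_zero]
      rw [hp] at h3; exact one_ne_zero h3
  set T : Set Q := {t | |P t| = M} with hTdef
  have htmaxT : tmax ∈ T := htmax
  have hTclosed : IsClosed T := isClosed_eq (continuous_abs.comp hPc) continuous_const
  have hTcomp : IsCompact T := hTclosed.isCompact
  set g : Q → (Fin n → ℝ) := fun t => (P t / M) • momentVec φ t with hgdef
  have hgc : Continuous g := (hPc.div_const M).smul (momentVec_continuous φ hcont)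
  have hsign : ∀ t ∈ T, Real.sign (P t) • momentVec φ t = g t := by
    intro t ht
    have habs : |P t| = M := ht
    rcases lt_trichotomy (P t) 0 with h | h | h
    · have hPt : P t = -M := by rw [abs_of_neg h] at habs; linarith
      rw [Real.sign_of_neg h, hgdef]
      simp only [hPt, neg_div, div_self hM0.ne']
    · exfalso; rw [h, abs_zero] at habs; linarith
    · have hPt : P t = M := by rw [abs_of_pos h] at habs; exact habs
      rw [Real.sign_of_pos h, hgdef]
      simp only [hPt, div_self hM0.ne']
  have hpg : ∀ t ∈ T, p ⬝ᵥ g t = M := by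
    intro t ht
    have habs : |P t| = M := ht
    have hsq : P t * P t = M * M := by nlinarith [abs_mul_abs_self (P t)]
    show p ⬝ᵥ ((P t / M) • momentVec φ t) = M
    rw [dotProduct_smul, smul_eq_mul]
    have h2 : p ⬝ᵥ momentVec φ t = P t := rfl
    rw [h2, div_mul_eq_mul_div, mul_comm, hsq, mul_div_assoc, div_self hM0.ne', mul_one]
  set S : Set (Fin n → ℝ) := {x | ∃ ts : Fin n → Q, ∃ cs : Fin n → ℝ,
    (∀ i, ts i ∈ T) ∧ (∀ i, 0 ≤ cs i) ∧ x = ∑ i, cs i • g (ts i)} with hSdef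
  have hmemS : ∀ (N : ℕ) (ts : Fin N → Q) (cs : Fin N → ℝ),
      (∀ i, ts i ∈ T) → (∀ i, 0 ≤ cs i) → (∑ i, cs i • g (ts i)) ∈ S := by
    intro N ts cs hts hcs
    obtain ⟨N', hN', v', c', hv', hc', hsum⟩ := conic_caratheodory (g '' T) N
      (fun i => g (ts i)) cs (fun i => ⟨ts i, hts i, rfl⟩) hcs
    choose ts' hts' hgts' using hv'
    refine ⟨fun i => if h : (i : ℕ) < N' then ts' ⟨i, h⟩ else tmax,
            fun i => if h : (i : ℕ) < N' then c' ⟨i, h⟩ else 0, ?_, ?_, ?_⟩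
    · intro i; dsimp only; split
      · exact hts' _
      · exact htmaxT
    · intro i; dsimp only; split
      · exact hc' _
      · exact le_refl 0
    · have h2 : ∑ i : Fin n, ((if h : (i : ℕ) < N' then c' ⟨i, h⟩ else 0) •
          g (if h : (i : ℕ) < N' then ts' ⟨i, h⟩ else tmax))
          = ∑ j : Fin N', c' j • g (ts' j) := by
        rw [← sum_dite_lt hN' (fun j => c' j • g (ts' j))]
        refine Finset.sum_congr rfl fun i _ => ?_
        by_cases h : (i : ℕ) < N' <;> simp [h]
      rw [h2]
      calc ∑ i, cs i • g (ts i) = ∑ j, c' j • v' j := hsum.symm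
        _ = ∑ j, c' j • g (ts' j) := Finset.sum_congr rfl fun j _ => by rw [hgts']
  have h0S : (0 : Fin n → ℝ) ∈ S :=
    ⟨fun _ => tmax, fun _ => 0, fun _ => htmaxT, fun _ => le_refl 0, by simp⟩
  have hSconv : Convex ℝ S := by
    intro x hx y hy a b ha hb hab
    obtain ⟨ts, cs, hts, hcs, rfl⟩ := hx
    obtain ⟨ss, ds, hss, hds, rfl⟩ := hy
    have heq : a • (∑ i, cs i • g (ts i)) + b • (∑ i, ds i • g (ss i))
        = ∑ i : Fin (n + n), (Fin.append (fun i => a * cs i) (fun i => b * ds i)) i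
            • g ((Fin.append ts ss) i) := by
      rw [Fin.sum_univ_add]
      simp only [Fin.append_left, Fin.append_right]
      rw [Finset.smul_sum, Finset.smul_sum]
      simp [smul_smul]
    rw [heq]
    refine hmemS _ _ _ ?_ ?_
    · intro i
      refine Fin.addCases (motive := fun i => Fin.append ts ss i ∈ T) ?_ ?_ i
      · intro j; rw [Fin.append_left]; exact hts j
      · intro j; rw [Fin.append_right]; exact hss j
    · intro i
      refine Fin.addCases (motive := fun i =>
        0 ≤ Fin.append (fun i => a * cs i) (fun i => b * ds i) i) ?_ ?_ i
      · intro j; rw [Fin.append_left]; exact mul_nonneg ha (hcs j)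
      · intro j; rw [Fin.append_right]; exact mul_nonneg hb (hds j)
  have hdotc : Continuous (fun y : Fin n → ℝ => p ⬝ᵥ y) := by
    unfold dotProduct
    exact continuous_finset_sum _ fun i _ => continuous_const.mul (continuous_apply i)
  have hSclosed : IsClosed S := by
    rw [← isSeqClosed_iff_isClosed]
    intro x x0 hx hx0
    simp only [hSdef, mem_setOf_eq] at hx ⊢
    choose ts cs hts hcs hxeq using hx
    have hdot : ∀ k, p ⬝ᵥ x k = M * ∑ i, cs k i := by
      intro k
      rw [hxeq k, dotProduct_finsum, Finset.mul_sum]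
      refine Finset.sum_congr rfl fun i _ => ?_
      rw [dotProduct_smul, smul_eq_mul, hpg _ (hts k i), mul_comm]
    have htend : Filter.Tendsto (fun k => p ⬝ᵥ x k) Filter.atTop (nhds (p ⬝ᵥ x0)) :=
      (hdotc.tendsto x0).comp hx0
    obtain ⟨K0, hK0⟩ := Filter.eventually_atTop.mp
      (htend.eventually_lt_const (lt_add_one (p ⬝ᵥ x0)))
    set R := (p ⬝ᵥ x0 + 1) / M with hR
    have hcb : ∀ k, K0 ≤ k → ∀ i, cs k i ≤ R := by
      intro k hk i
      have h1 : ∑ j, cs k j ≤ R := by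
        rw [hR, le_div_iff₀ hM0]
        have h3 := hK0 k hk; rw [hdot k] at h3; linarith
      have h2 : cs k i ≤ ∑ j, cs k j :=
        Finset.single_le_sum (fun j _ => hcs k j) (Finset.mem_univ i)
      linarith
    set F : (Fin n → ℝ) × (Fin n → Q) → (Fin n → ℝ) :=
      fun cd => ∑ i, cd.1 i • g (cd.2 i) with hF
    have hFc : Continuous F := continuous_finset_sum _ fun i _ =>
      ((continuous_apply i).comp continuous_fst).smul
        (hgc.comp ((continuous_apply i).comp continuous_snd))
    set K : Set (Fin n → ℝ) :=
      F '' ((Set.pi univ fun _ => Icc (0:ℝ) R) ×ˢ (Set.pi univ fun _ => T)) with hK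
    have hKcomp : IsCompact K :=
      (((isCompact_univ_pi fun _ => isCompact_Icc).prod
        (isCompact_univ_pi fun _ => hTcomp))).image hFc
    have hxK : ∀ j : ℕ, x (j + K0) ∈ K := by
      intro j
      refine ⟨(cs (j + K0), ts (j + K0)), ⟨?_, ?_⟩, (hxeq (j + K0)).symm⟩
      · intro i _; exact ⟨hcs _ i, hcb _ (Nat.le_add_left _ _) i⟩
      · intro i _; exact hts _ i
    have hx0K : x0 ∈ K := hKcomp.isClosed.mem_of_tendsto
      (hx0.comp (Filter.tendsto_add_atTop_nat K0)) (Filter.Eventually.of_forall hxK)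
    obtain ⟨⟨cc, tt⟩, ⟨hcc, htt⟩, heq⟩ := hx0K
    exact ⟨tt, cc, fun i => htt i (mem_univ i), fun i => (hcc i (mem_univ i)).1, heq.symm⟩
  constructor
  · intro hopt
    by_contra hno
    have hlS : ℓ ∉ S := by
      intro hmem
      apply hno
      obtain ⟨ts, cs, hts, hcs, heq⟩ := hmem
      refine ⟨n, le_refl n, ts, fun i => hts i, cs, hcs, Or.inl ?_⟩
      calc ℓ = ∑ i, cs i • g (ts i) := heq
        _ = ∑ i, cs i • Real.sign (P (ts i)) • momentVec φ (ts i) :=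
          Finset.sum_congr rfl fun i _ => by rw [hsign _ (hts i)]
    obtain ⟨f, u0, hfu, huf⟩ := geometric_hahn_banach_closed_point hSconv hSclosed hlS
    have hu0 : 0 < u0 := by have h2 := hfu 0 h0S; simpa using h2
    have hfT : ∀ t ∈ T, f (g t) ≤ 0 := by
      intro t ht
      by_contra hpos
      push_neg at hpos
      have hmem : ((u0 + 1) / f (g t)) • g t ∈ S := by
        have h2 := hmemS 1 (fun _ => t) (fun _ => (u0 + 1) / f (g t)) (fun _ => ht)
          (fun _ => div_nonneg (by linarith) hpos.le)
        simpa using h2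
      have h2 := hfu _ hmem
      rw [f.map_smul, smul_eq_mul, div_mul_cancel₀ _ hpos.ne'] at h2
      linarith
    set h : Fin n → ℝ := fun i => f (Pi.single i (1:ℝ) : Fin n → ℝ) with hhdef
    have hfeq : ∀ v : Fin n → ℝ, f v = v ⬝ᵥ h := by
      intro v
      have hv : v = ∑ i, v i • (Pi.single i (1:ℝ) : Fin n → ℝ) := by
        funext j
        simp [Pi.single_apply, eq_comm]
      conv_lhs => rw [hv]
      rw [map_sum]
      simp only [f.map_smul, smul_eq_mul]
      rfl
    have hlh : 0 < ℓ ⬝ᵥ h := by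
      have h2 := huf
      rw [hfeq ℓ] at h2
      linarith
    set δ : ℝ := (ℓ ⬝ᵥ h) / 2 with hδdef
    have hδ : 0 < δ := half_pos hlh
    set h' : Fin n → ℝ := h - δ • p with hh'def
    set H' : Q → ℝ := polyEval φ h' with hH'def
    have hH'c : Continuous H' := polyEval_continuous φ hcont h'
    have hlh' : ℓ ⬝ᵥ h' = δ := by
      rw [hh'def, dotProduct_sub, dotProduct_smul, smul_eq_mul, hp, mul_one, hδdef]; ring
    have hTH' : ∀ t ∈ T, P t * H' t ≤ -(δ * (M * M)) := by
      intro t ht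
      have h1 : f (g t) ≤ 0 := hfT t ht
      rw [hfeq] at h1
      have hgth : g t ⬝ᵥ h = (P t / M) * (polyEval φ h t) := by
        show ((P t / M) • momentVec φ t) ⬝ᵥ h = _
        rw [smul_dotProduct, smul_eq_mul, dotProduct_comm]
        rfl
      rw [hgth] at h1
      have habs : |P t| = M := ht
      have hsq : P t * P t = M * M := by nlinarith [abs_mul_abs_self (P t)]
      have hH't : H' t = polyEval φ h t - δ * P t := by
        show (h - δ • p) ⬝ᵥ momentVec φ t = _
        rw [sub_dotProduct, smul_dotProduct, smul_eq_mul]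
        rfl
      have h3 : P t * polyEval φ h t ≤ 0 := by
        have h4 : P t * polyEval φ h t = M * ((P t / M) * polyEval φ h t) := by
          field_simp
        rw [h4]
        exact mul_nonpos_of_nonneg_of_nonpos hM0.le h1
      have h5 : δ * (P t * P t) = δ * (M * M) := by rw [hsq]
      rw [hH't]
      nlinarith [h3, h5]
    set U : Set Q := {t | P t * H' t < -(δ * (M * M)) / 2} with hUdef
    have hUopen : IsOpen U := isOpen_lt (hPc.mul hH'c) continuous_const
    have hTU : T ⊆ U := fun t ht =>
      lt_of_le_of_lt (hTH' t ht)
        (by have := mul_pos hδ (mul_pos hM0 hM0); linarith)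
    obtain ⟨B, hBnn, hH'le⟩ : ∃ B : ℝ, 0 ≤ B ∧ ∀ t, |H' t| ≤ B :=
      ⟨supNorm H', (abs_nonneg _).trans (abs_le_supNorm hH'c (Classical.arbitrary Q)),
        fun t => abs_le_supNorm hH'c t⟩
    have hPeval : ∀ t : Q, polyEval φ p t = P t := fun t => rfl
    have hH'eval : ∀ t : Q, polyEval φ h' t = H' t := fun t => rfl
    have hTmem : ∀ t : Q, |P t| = M → t ∈ T := fun _ ht => ht
    clear_value H' h' δ h S g T M P
    have hUbound : ∀ ε : ℝ, 0 < ε → ε * (B * B) ≤ δ * (M * M) →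
        ∀ t ∈ U, |P t + ε * H' t| ≤ M := by
      intro ε hε hεB t ht
      have h1 : P t * H' t < -(δ * (M * M)) / 2 := ht
      have h2 : |H' t| ≤ B := hH'le t
      have h3 : |P t| ≤ M := hle t
      have e1 : H' t * H' t ≤ B * B := by
        rw [← abs_mul_abs_self (H' t)]
        exact mul_self_le_mul_self (abs_nonneg _) h2
      have e2 : P t * P t ≤ M * M := by
        rw [← abs_mul_abs_self (P t)]
        exact mul_self_le_mul_self (abs_nonneg _) h3
      have e3 : ε * (H' t * H' t) ≤ δ * (M * M) :=
        le_trans (mul_le_mul_of_nonneg_left e1 hε.le) hεB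
      have f1 : 2 * ε * (P t * H' t) ≤ 2 * ε * (-(δ * (M * M)) / 2) :=
        le_of_lt (mul_lt_mul_of_pos_left h1 (by linarith))
      have f2 : ε * (ε * (H' t * H' t)) ≤ ε * (δ * (M * M)) :=
        mul_le_mul_of_nonneg_left e3 hε.le
      have hsq : (P t + ε * H' t) ^ 2 ≤ M ^ 2 := by nlinarith [f1, f2, e2, e3]
      exact abs_le.mpr (abs_le_of_sq_le_sq' hsq hM0.le)
    have hkey : ∃ ε : ℝ, 0 < ε ∧ ∀ t, |P t + ε * H' t| ≤ M := by
      by_cases hC : (Uᶜ : Set Q) = ∅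
      · refine ⟨δ * (M * M) / (B * B + 1), by positivity, fun t => ?_⟩
        have htU : t ∈ U := by
          by_contra h2
          exact (eq_empty_iff_forall_notMem.mp hC t) h2
        refine hUbound _ (by positivity) ?_ t htU
        rw [div_mul_eq_mul_div, div_le_iff₀ (by positivity)]
        nlinarith [hδ, hM0, hBnn]
      · obtain ⟨t1, ht1U, ht1max⟩ := (hUopen.isClosed_compl.isCompact).exists_isMaxOn
          (nonempty_iff_ne_empty.mpr hC) (hPc.abs.continuousOn)
        set M1 := |P t1| with hM1
        have hM1M : M1 < M := lt_of_le_of_ne (hle t1) (fun h2 => ht1U (hTU (hTmem _ h2)))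
        set ε := min (δ * (M * M) / (B * B + 1)) ((M - M1) / (B + 1)) with hε
        have hεpos : 0 < ε := lt_min (by positivity) (div_pos (by linarith) (by linarith))
        refine ⟨ε, hεpos, fun t => ?_⟩
        by_cases htU : t ∈ U
        · refine hUbound ε hεpos ?_ t htU
          have h2 : ε ≤ δ * (M * M) / (B * B + 1) := min_le_left _ _
          have h3 : δ * (M * M) / (B * B + 1) * (B * B) ≤ δ * (M * M) := by
            rw [div_mul_eq_mul_div, div_le_iff₀ (by positivity)]
            nlinarith [hδ, hM0, hBnn]
          calc ε * (B * B) ≤ δ * (M * M) / (B * B + 1) * (B * B) :=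
                mul_le_mul_of_nonneg_right h2 (by positivity)
            _ ≤ δ * (M * M) := h3
        · have h2 : |P t| ≤ M1 := (isMaxOn_iff.mp ht1max) t htU
          have h3 : ε ≤ (M - M1) / (B + 1) := min_le_right _ _
          have h5 : (M - M1) / (B + 1) * B ≤ M - M1 := by
            rw [div_mul_eq_mul_div, div_le_iff₀ (by linarith)]
            nlinarith [hBnn, hM1M]
          have h4 : ε * B ≤ M - M1 := by
            have h6 := mul_le_mul_of_nonneg_right h3 hBnn
            linarith
          have h6 : |ε * H' t| ≤ ε * B := by
            rw [abs_mul, abs_of_pos hεpos]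
            exact mul_le_mul_of_nonneg_left (hH'le t) hεpos.le
          calc |P t + ε * H' t| ≤ |P t| + |ε * H' t| := abs_add_le _ _
            _ ≤ M1 + ε * B := by linarith
            _ ≤ M := by linarith
    obtain ⟨ε, hεpos, hbound⟩ := hkey
    set q : Fin n → ℝ := (1 / (1 + ε * δ)) • (p + ε • h') with hqdef
    have hden : 0 < 1 + ε * δ := by positivity
    have hlq : ℓ ⬝ᵥ q = 1 := by
      rw [hqdef, dotProduct_smul, smul_eq_mul, dotProduct_add, dotProduct_smul,
        smul_eq_mul, hp, hlh']
      field_simp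
    have hqe : ∀ t, polyEval φ q t = (1 / (1 + ε * δ)) * (P t + ε * H' t) := by
      intro t
      show ((1 / (1 + ε * δ)) • (p + ε • h')) ⬝ᵥ momentVec φ t = _
      rw [smul_dotProduct, smul_eq_mul, add_dotProduct, smul_dotProduct, smul_eq_mul,
        show p ⬝ᵥ momentVec φ t = P t from hPeval t,
        show h' ⬝ᵥ momentVec φ t = H' t from hH'eval t]
    have hqsup : supNorm (polyEval φ q) ≤ M / (1 + ε * δ) := by
      refine supNorm_le (by positivity) fun t => ?_
      rw [hqe t, abs_mul, abs_of_pos (by positivity : (0:ℝ) < 1 / (1 + ε * δ))]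
      calc 1 / (1 + ε * δ) * |P t + ε * H' t| ≤ 1 / (1 + ε * δ) * M :=
            mul_le_mul_of_nonneg_left (hbound t) (by positivity)
        _ = M / (1 + ε * δ) := by ring
    have hlt : M / (1 + ε * δ) < M := by
      rw [div_lt_iff₀ hden]
      nlinarith [mul_pos (mul_pos hM0 hεpos) hδ]
    have h7 := hopt q hlq
    linarith
  · rintro ⟨N, hNn, ts, habs, cs, hcs, hcase | hcase⟩ q hq
    · have hterm : ∀ i, (cs i • Real.sign (P (ts i)) • momentVec φ (ts i)) ⬝ᵥ p
          = cs i * M := by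
        intro i
        rw [smul_dotProduct, smul_dotProduct, smul_eq_mul, smul_eq_mul]
        rw [show momentVec φ (ts i) ⬝ᵥ p = P (ts i) from dotProduct_comm _ _]
        rw [real_sign_mul_self, habs i]
      have hp' := hp
      rw [hcase] at hp'
      rw [finsum_dotProduct] at hp'
      rw [Finset.sum_congr rfl fun i _ => hterm i] at hp'
      have hcsum : (∑ i, cs i) * M = 1 := by
        rw [Finset.sum_mul]; exact hp'
      have hspos : 0 < ∑ i, cs i := by
        by_contra hns
        push_neg at hns
        have h2 : (∑ i, cs i) * M ≤ 0 := mul_nonpos_of_nonpos_of_nonneg hns hM0.le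
        rw [hcsum] at h2; linarith
      set Qv := polyEval φ q with hQv
      have hQvc : Continuous Qv := polyEval_continuous φ hcont q
      have htermq : ∀ i, (cs i • Real.sign (P (ts i)) • momentVec φ (ts i)) ⬝ᵥ q
          = cs i * (Real.sign (P (ts i)) * Qv (ts i)) := by
        intro i
        rw [smul_dotProduct, smul_dotProduct, smul_eq_mul, smul_eq_mul]
        rw [show momentVec φ (ts i) ⬝ᵥ q = Qv (ts i) from dotProduct_comm _ _]
      have hq' := hq
      rw [hcase] at hq'
      rw [finsum_dotProduct] at hq'
      rw [Finset.sum_congr rfl fun i _ => htermq i] at hq'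
      have h3 : (1:ℝ) ≤ (∑ i, cs i) * supNorm Qv := by
        rw [← hq', Finset.sum_mul]
        refine Finset.sum_le_sum fun i _ => ?_
        have h4 : Real.sign (P (ts i)) * Qv (ts i) ≤ supNorm Qv :=
          le_trans (real_sign_mul_le_abs _ _) (abs_le_supNorm hQvc _)
        exact mul_le_mul_of_nonneg_left h4 (hcs i)
      have h5 : (∑ i, cs i) * M ≤ (∑ i, cs i) * supNorm Qv := by
        rw [hcsum]; exact h3
      exact le_of_mul_le_mul_left h5 hspos
    · exfalso
      have hterm : ∀ i, (cs i • Real.sign (P (ts i)) • momentVec φ (ts i)) ⬝ᵥ p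
          = cs i * M := by
        intro i
        rw [smul_dotProduct, smul_dotProduct, smul_eq_mul, smul_eq_mul]
        rw [show momentVec φ (ts i) ⬝ᵥ p = P (ts i) from dotProduct_comm _ _]
        rw [real_sign_mul_self, habs i]
      have hp' : (-ℓ) ⬝ᵥ p = -1 := by rw [neg_dotProduct, hp]
      rw [hcase] at hp'
      rw [finsum_dotProduct] at hp'
      rw [Finset.sum_congr rfl fun i _ => hterm i] at hp'
      have h2 : (0:ℝ) ≤ ∑ i, cs i * M :=
        Finset.sum_nonneg fun i _ => mul_nonneg (hcs i) hM0.le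
      linarith
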